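/- arXiv:2509.02787 — 2 statements merged into one kernel-verified Lean document; each statement's English description precedes it below -/
import Mathlib

section
/- Let X be a real normed vector space, K ⊂ X a non-zero wedge, and 𝒜 a nonempty set of homogeneous, bounded maps on K. With β_m = inf_{f∈𝒜^m} ‖f‖ and γ_m = inf_{f∈𝒜^m} r(f), the common subradius r_*(𝒜) satisfies r_*(𝒜) = lim_{m→∞} β_m^{1/m} = liminf_{m→∞} γ_m^{1/m}. -/
open Filter Topology Set

noncomputable section

/-- A wedge in a real normed space: a convex set closed under positive scalar multiplication. -/
def IsWedge {X : Type*} [NormedAddCommGroup X] [NormedSpace ℝ X] (W : Set X) : Prop :=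
  Convex ℝ W ∧ ∀ c : ℝ, 0 < c → ∀ x ∈ W, c • x ∈ W

/-- A closed cone: closed, convex, closed under positive scalar multiplication, K ∩ (−K) = {0}. -/
def IsClosedCone {X : Type*} [NormedAddCommGroup X] [NormedSpace ℝ X] (K : Set X) : Prop :=
  IsClosed K ∧ Convex ℝ K ∧ (∀ c : ℝ, 0 < c → ∀ x ∈ K, c • x ∈ K) ∧ K ∩ (-K) = {0}

/-- A polyhedral cone: intersection of finitely many closed halfspaces through the origin. -/
def IsPolyhedralCone {X : Type*} [NormedAddCommGroup X] [NormedSpace ℝ X] (K : Set X) : Prop :=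
  ∃ (k : ℕ) (φ : Fin k → (X →ₗ[ℝ] ℝ)), K = {x | ∀ i, 0 ≤ φ i x}

/-- `f` maps `W` into itself and is positively homogeneous on `W`. -/
def HomogOn {X : Type*} [NormedAddCommGroup X] [NormedSpace ℝ X] (f : X → X) (W : Set X) : Prop :=
  Set.MapsTo f W W ∧ ∀ c : ℝ, 0 < c → ∀ x ∈ W, f (c • x) = c • f x

/-- `f` is order-preserving with respect to the order induced by the cone `K`. -/
def OrderPresOn {X : Type*} [NormedAddCommGroup X] [NormedSpace ℝ X] (f : X → X) (K : Set X) : Prop :=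
  ∀ x ∈ K, ∀ y ∈ K, y - x ∈ K → f y - f x ∈ K

/-- `f` is subadditive on `K`: f(x+y) ≤ f(x)+f(y) in the cone order. -/
def SubaddOn {X : Type*} [NormedAddCommGroup X] [NormedSpace ℝ X] (f : X → X) (K : Set X) : Prop :=
  ∀ x ∈ K, ∀ y ∈ K, (f x + f y) - f (x + y) ∈ K

/-- The norm of a homogeneous map on `W`: sup of ‖f x‖ over unit vectors of `W`. -/
def opNormW {X : Type*} [NormedAddCommGroup X] (f : X → X) (W : Set X) : ℝ :=
  sSup ((fun x => ‖f x‖) '' {x ∈ W | ‖x‖ = 1})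

/-- A bounded homogeneous map on `W`. -/
def BoundedMapOn {X : Type*} [NormedAddCommGroup X] (f : X → X) (W : Set X) : Prop :=
  ∃ C : ℝ, ∀ x ∈ W, ‖f x‖ ≤ C * ‖x‖

/-- A bounded family of homogeneous maps on `W`. -/
def BoundedFamOn {X : Type*} [NormedAddCommGroup X] (A : Set (X → X)) (W : Set X) : Prop :=
  ∃ C : ℝ, ∀ f ∈ A, ∀ x ∈ W, ‖f x‖ ≤ C * ‖x‖

/-- `famPow A m` = 𝒜^m, the set of m-fold compositions of maps from `A` (with 𝒜^0 = {id}). -/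
def famPow {X : Type*} (A : Set (X → X)) : ℕ → Set (X → X)
  | 0 => {id}
  | m + 1 => {h | ∃ f ∈ A, ∃ g ∈ famPow A m, h = f ∘ g}

/-- The composition of two families of maps. -/
def compFam {X : Type*} (A B : Set (X → X)) : Set (X → X) :=
  {h | ∃ f ∈ A, ∃ g ∈ B, h = f ∘ g}

/-- The Bonsall cone spectral radius r(f) = inf_{n>0} ‖f^n‖^{1/n}. -/
def coneSpecRad {X : Type*} [NormedAddCommGroup X] (f : X → X) (W : Set X) : ℝ :=
  ⨅ n : ℕ+, (opNormW (f^[(n : ℕ)]) W) ^ (((n : ℕ) : ℝ)⁻¹)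

/-- sup_{f ∈ 𝒜^m} ‖f‖^{1/m}. -/
def jointTerm {X : Type*} [NormedAddCommGroup X] (A : Set (X → X)) (W : Set X) (m : ℕ) : ℝ :=
  sSup ((fun f => (opNormW f W) ^ ((m : ℝ)⁻¹)) '' famPow A m)

/-- sup_{f ∈ 𝒜^m} r(f)^{1/m}. -/
def genTerm {X : Type*} [NormedAddCommGroup X] (A : Set (X → X)) (W : Set X) (m : ℕ) : ℝ :=
  sSup ((fun f => (coneSpecRad f W) ^ ((m : ℝ)⁻¹)) '' famPow A m)

/-- The joint spectral radius r̂(𝒜) = inf_{m>0} sup_{f ∈ 𝒜^m} ‖f‖^{1/m}. -/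
def jointRad {X : Type*} [NormedAddCommGroup X] (A : Set (X → X)) (W : Set X) : ℝ :=
  ⨅ m : ℕ+, jointTerm A W (m : ℕ)

/-- The generalized spectral radius r(𝒜) = sup_{m>0} sup_{f ∈ 𝒜^m} r(f)^{1/m}. -/
def genRad {X : Type*} [NormedAddCommGroup X] (A : Set (X → X)) (W : Set X) : ℝ :=
  ⨆ m : ℕ+, genTerm A W (m : ℕ)

/-- β_m = inf_{f ∈ 𝒜^m} ‖f‖. -/
def subBeta {X : Type*} [NormedAddCommGroup X] (A : Set (X → X)) (W : Set X) (m : ℕ) : ℝ :=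
  sInf ((fun f => opNormW f W) '' famPow A m)

/-- γ_m = inf_{f ∈ 𝒜^m} r(f). -/
def subGamma {X : Type*} [NormedAddCommGroup X] (A : Set (X → X)) (W : Set X) (m : ℕ) : ℝ :=
  sInf ((fun f => coneSpecRad f W) '' famPow A m)

/-- F_m^d = f_m ∘ ⋯ ∘ f_1 for a sequence d of maps. -/
def seqComp {X : Type*} (d : ℕ → X → X) : ℕ → X → X
  | 0 => id
  | m + 1 => d m ∘ seqComp d m

/-- The standard cone ℝⁿ_{≥0}. -/
def stdCone (n : ℕ) : Set (Fin n → ℝ) := {x | ∀ i, 0 ≤ x i}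

/-- The closed face F_J of the standard cone. -/
def stdFace {n : ℕ} (J : Set (Fin n)) : Set (Fin n → ℝ) :=
  {x | (∀ i, 0 ≤ x i) ∧ ∀ i ∉ J, x i = 0}

/-- A family of maps on ℝⁿ_{≥0} is irreducible if no non-trivial closed face is invariant
under every member of the family. -/
def IrreducibleFam {n : ℕ} (A : Set ((Fin n → ℝ) → Fin n → ℝ)) : Prop :=
  ¬ ∃ J : Set (Fin n), J.Nonempty ∧ J ≠ Set.univ ∧ ∀ f ∈ A, Set.MapsTo f (stdFace J) (stdFace J)


namespace Stmt17Aux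

open Real

set_option linter.unusedSectionVars false

variable {X : Type*} [NormedAddCommGroup X] [NormedSpace ℝ X]

lemma unit_mem {W : Set X} (hW : IsWedge W) (hW0 : ∃ x ∈ W, x ≠ 0) :
    {x ∈ W | ‖x‖ = 1}.Nonempty := by
  obtain ⟨x, hxW, hx⟩ := hW0
  have hnx : (0:ℝ) < ‖x‖ := norm_pos_iff.2 hx
  refine ⟨‖x‖⁻¹ • x, hW.2 _ (inv_pos.2 hnx) x hxW, ?_⟩
  rw [norm_smul, norm_inv, norm_norm, inv_mul_cancel₀ hnx.ne']

lemma opNormW_nonneg (f : X → X) (W : Set X) : 0 ≤ opNormW f W :=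
  Real.sSup_nonneg (by rintro r ⟨x, _, rfl⟩; exact norm_nonneg _)

lemma bddAbove_opn {f : X → X} {W : Set X} (hb : BoundedMapOn f W) :
    BddAbove ((fun x => ‖f x‖) '' {x ∈ W | ‖x‖ = 1}) := by
  obtain ⟨C, hC⟩ := hb
  refine ⟨max C 0, ?_⟩
  rintro r ⟨x, ⟨hxW, hx1⟩, rfl⟩
  exact le_max_iff.2 (Or.inl (by simpa [hx1] using hC x hxW))

lemma norm_le_opNormW {f : X → X} {W : Set X} (hW : IsWedge W)
    (hf : HomogOn f W) (hb : BoundedMapOn f W) {x : X} (hx : x ∈ W) :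
    ‖f x‖ ≤ opNormW f W * ‖x‖ := by
  rcases eq_or_ne x 0 with rfl | hx0
  · have h2 : f ((2:ℝ) • (0:X)) = (2:ℝ) • f 0 := hf.2 2 two_pos 0 hx
    rw [smul_zero, two_smul] at h2
    have hf0 : f 0 = 0 := left_eq_add.mp h2
    simp [hf0]
  · have hnx : (0:ℝ) < ‖x‖ := norm_pos_iff.2 hx0
    have hyW : ‖x‖⁻¹ • x ∈ W := hW.2 _ (inv_pos.2 hnx) x hx
    have hy1 : ‖‖x‖⁻¹ • x‖ = 1 := by
      rw [norm_smul, norm_inv, norm_norm, inv_mul_cancel₀ hnx.ne']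
    have hfx : f x = ‖x‖ • f (‖x‖⁻¹ • x) := by
      have h := hf.2 ‖x‖ hnx _ hyW
      rwa [smul_inv_smul₀ hnx.ne'] at h
    have hle : ‖f (‖x‖⁻¹ • x)‖ ≤ opNormW f W :=
      le_csSup (bddAbove_opn hb) ⟨_, ⟨hyW, hy1⟩, rfl⟩
    calc ‖f x‖ = ‖x‖ * ‖f (‖x‖⁻¹ • x)‖ := by rw [hfx, norm_smul, norm_norm]
    _ ≤ ‖x‖ * opNormW f W := by
        exact mul_le_mul_of_nonneg_left hle hnx.le
    _ = opNormW f W * ‖x‖ := mul_comm _ _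

lemma homogOn_id (W : Set X) : HomogOn id W :=
  ⟨Set.mapsTo_id W, fun _ _ _ _ => rfl⟩

lemma boundedOn_id (W : Set X) : BoundedMapOn (id : X → X) W :=
  ⟨1, fun x _ => by simp⟩

lemma homogOn_comp {f g : X → X} {W : Set X} (hf : HomogOn f W) (hg : HomogOn g W) :
    HomogOn (f ∘ g) W := by
  refine ⟨hf.1.comp hg.1, fun c hc x hx => ?_⟩
  simp only [Function.comp_apply]
  rw [hg.2 c hc x hx, hf.2 c hc _ (hg.1 hx)]

lemma boundedOn_comp {f g : X → X} {W : Set X} (hW : IsWedge W)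
    (hf : HomogOn f W) (hbf : BoundedMapOn f W)
    (hg : HomogOn g W) (hbg : BoundedMapOn g W) :
    BoundedMapOn (f ∘ g) W := by
  refine ⟨opNormW f W * opNormW g W, fun x hx => ?_⟩
  calc ‖f (g x)‖ ≤ opNormW f W * ‖g x‖ := norm_le_opNormW hW hf hbf (hg.1 hx)
  _ ≤ opNormW f W * (opNormW g W * ‖x‖) :=
      mul_le_mul_of_nonneg_left (norm_le_opNormW hW hg hbg hx) (opNormW_nonneg f W)
  _ = opNormW f W * opNormW g W * ‖x‖ := (mul_assoc _ _ _).symm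

lemma opNormW_comp_le {f g : X → X} {W : Set X} (hW : IsWedge W)
    (hf : HomogOn f W) (hbf : BoundedMapOn f W)
    (hg : HomogOn g W) (hbg : BoundedMapOn g W) :
    opNormW (f ∘ g) W ≤ opNormW f W * opNormW g W := by
  apply Real.sSup_le
  · rintro r ⟨x, ⟨hxW, hx1⟩, rfl⟩
    calc ‖(f ∘ g) x‖ ≤ opNormW f W * ‖g x‖ := norm_le_opNormW hW hf hbf (hg.1 hxW)
    _ ≤ opNormW f W * (opNormW g W * ‖x‖) :=
        mul_le_mul_of_nonneg_left (norm_le_opNormW hW hg hbg hxW) (opNormW_nonneg f W)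
    _ = opNormW f W * opNormW g W := by rw [hx1]; ring
  · exact mul_nonneg (opNormW_nonneg f W) (opNormW_nonneg g W)

lemma opNormW_id {W : Set X} (hS : {x ∈ W | ‖x‖ = 1}.Nonempty) :
    opNormW (id : X → X) W = 1 := by
  obtain ⟨x0, hx0⟩ := hS
  apply le_antisymm
  · apply Real.sSup_le
    · rintro r ⟨x, ⟨_, hx1⟩, rfl⟩; simp [hx1]
    · norm_num
  · exact le_csSup (bddAbove_opn (boundedOn_id W)) ⟨x0, hx0, by simp [hx0.2]⟩

lemma famPow_nonempty {A : Set (X → X)} (hAne : A.Nonempty) (m : ℕ) :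
    (famPow A m).Nonempty := by
  induction m with
  | zero => exact ⟨id, rfl⟩
  | succ m ih =>
    obtain ⟨f, hf⟩ := hAne
    obtain ⟨g, hg⟩ := ih
    exact ⟨f ∘ g, f, hf, g, hg, rfl⟩

lemma famPow_props {A : Set (X → X)} {W : Set X} (hW : IsWedge W)
    (hA : ∀ f ∈ A, HomogOn f W ∧ BoundedMapOn f W) (m : ℕ) :
    ∀ f ∈ famPow A m, HomogOn f W ∧ BoundedMapOn f W := by
  induction m with
  | zero =>
    rintro f (rfl : f = id)
    exact ⟨homogOn_id W, boundedOn_id W⟩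
  | succ m ih =>
    rintro h ⟨f, hf, g, hg, rfl⟩
    obtain ⟨hf1, hf2⟩ := hA f hf
    obtain ⟨hg1, hg2⟩ := ih g hg
    exact ⟨homogOn_comp hf1 hg1, boundedOn_comp hW hf1 hf2 hg1 hg2⟩

lemma comp_mem_famPow {A : Set (X → X)} {f g : X → X} {m n : ℕ}
    (hf : f ∈ famPow A m) (hg : g ∈ famPow A n) : f ∘ g ∈ famPow A (m + n) := by
  induction m generalizing f with
  | zero =>
    obtain rfl : f = id := hf
    simpa using hg
  | succ m ih =>
    obtain ⟨a, ha, f', hf', rfl⟩ := hf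
    have : (a ∘ f') ∘ g = a ∘ (f' ∘ g) := rfl
    rw [this]
    have hmem : f' ∘ g ∈ famPow A (m + n) := ih hf'
    have : m + 1 + n = (m + n) + 1 := by omega
    rw [this]
    exact ⟨a, ha, f' ∘ g, hmem, rfl⟩

lemma famPow_decomp {A : Set (X → X)} {m n : ℕ} :
    ∀ h ∈ famPow A (m + n), ∃ f ∈ famPow A m, ∃ g ∈ famPow A n, h = f ∘ g := by
  induction m with
  | zero =>
    intro h hh
    exact ⟨id, rfl, h, by simpa using hh, rfl⟩
  | succ m ih =>
    intro h hh
    have : m + 1 + n = (m + n) + 1 := by omega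
    rw [this] at hh
    obtain ⟨a, ha, h', hh', rfl⟩ := hh
    obtain ⟨f, hf, g, hg, rfl⟩ := ih h' hh'
    exact ⟨a ∘ f, ⟨a, ha, f, hf, rfl⟩, g, hg, rfl⟩

lemma iterate_mem_famPow {A : Set (X → X)} {f : X → X} {m : ℕ}
    (hf : f ∈ famPow A m) (n : ℕ) : f^[n] ∈ famPow A (n * m) := by
  induction n with
  | zero => rw [Nat.zero_mul]; exact rfl
  | succ n ih =>
    rw [Function.iterate_succ']
    have h := comp_mem_famPow hf ih
    have : m + n * m = (n + 1) * m := by ring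
    rwa [this] at h

lemma subBeta_nonneg (A : Set (X → X)) (W : Set X) (m : ℕ) : 0 ≤ subBeta A W m :=
  Real.sInf_nonneg (by rintro r ⟨f, _, rfl⟩; exact opNormW_nonneg f W)

lemma subBeta_le {A : Set (X → X)} {W : Set X} {f : X → X} {m : ℕ}
    (hf : f ∈ famPow A m) : subBeta A W m ≤ opNormW f W :=
  csInf_le ⟨0, by rintro r ⟨g, _, rfl⟩; exact opNormW_nonneg g W⟩ ⟨f, hf, rfl⟩

lemma subBeta_zero {A : Set (X → X)} {W : Set X} (hS : {x ∈ W | ‖x‖ = 1}.Nonempty) :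
    subBeta A W 0 = 1 := by
  have : (fun f => opNormW f W) '' famPow A 0 = {1} := by
    rw [show famPow A 0 = {id} from rfl, Set.image_singleton, opNormW_id hS]
  rw [subBeta, this, csInf_singleton]

lemma subBeta_submul {A : Set (X → X)} {W : Set X} (hW : IsWedge W)
    (hAne : A.Nonempty) (hA : ∀ f ∈ A, HomogOn f W ∧ BoundedMapOn f W) (m n : ℕ) :
    subBeta A W (m + n) ≤ subBeta A W m * subBeta A W n := by
  have key : ∀ δ : ℝ, 0 < δ →
      subBeta A W (m + n) ≤ (subBeta A W m + δ) * (subBeta A W n + δ) := by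
    intro δ hδ
    obtain ⟨bf, ⟨f, hf, rfl⟩, hbf⟩ :=
      exists_lt_of_csInf_lt ((famPow_nonempty hAne m).image _)
        (lt_add_of_pos_right (subBeta A W m) hδ)
    obtain ⟨bg, ⟨g, hg, rfl⟩, hbg⟩ :=
      exists_lt_of_csInf_lt ((famPow_nonempty hAne n).image _)
        (lt_add_of_pos_right (subBeta A W n) hδ)
    obtain ⟨hf1, hf2⟩ := famPow_props hW hA m f hf
    obtain ⟨hg1, hg2⟩ := famPow_props hW hA n g hg
    calc subBeta A W (m + n) ≤ opNormW (f ∘ g) W := subBeta_le (comp_mem_famPow hf hg)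
    _ ≤ opNormW f W * opNormW g W := opNormW_comp_le hW hf1 hf2 hg1 hg2
    _ ≤ (subBeta A W m + δ) * (subBeta A W n + δ) :=
        mul_le_mul hbf.le hbg.le (opNormW_nonneg g W)
          (le_trans (subBeta_nonneg A W m) (by linarith))
  have tend : Tendsto (fun δ : ℝ => (subBeta A W m + δ) * (subBeta A W n + δ)) (𝓝[>] 0)
      (𝓝 (subBeta A W m * subBeta A W n)) := by
    have hc : ContinuousAt (fun δ : ℝ => (subBeta A W m + δ) * (subBeta A W n + δ)) 0 := by
      fun_prop
    have h2 := hc.continuousWithinAt (s := Set.Ioi (0:ℝ))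
    rw [ContinuousWithinAt] at h2
    simpa using h2
  exact ge_of_tendsto tend (eventually_mem_nhdsWithin.mono fun δ hδ => key δ hδ)

lemma coneSpecRad_nonneg (f : X → X) (W : Set X) : 0 ≤ coneSpecRad f W :=
  le_ciInf fun _ => Real.rpow_nonneg (opNormW_nonneg _ W) _

lemma coneSpecRad_le_opNormW (f : X → X) (W : Set X) : coneSpecRad f W ≤ opNormW f W := by
  have h := ciInf_le (f := fun n : ℕ+ => (opNormW (f^[(n : ℕ)]) W) ^ (((n : ℕ) : ℝ)⁻¹))
    ⟨0, by rintro r ⟨n, rfl⟩; exact Real.rpow_nonneg (opNormW_nonneg _ W) _⟩ (1 : ℕ+)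
  simpa [coneSpecRad] using h

lemma subGamma_nonneg (A : Set (X → X)) (W : Set X) (m : ℕ) : 0 ≤ subGamma A W m :=
  Real.sInf_nonneg (by rintro r ⟨f, _, rfl⟩; exact coneSpecRad_nonneg f W)

lemma subGamma_le_subBeta {A : Set (X → X)} (W : Set X) (hAne : A.Nonempty) (m : ℕ) :
    subGamma A W m ≤ subBeta A W m := by
  apply le_csInf ((famPow_nonempty hAne m).image _)
  rintro r ⟨f, hf, rfl⟩
  calc subGamma A W m ≤ coneSpecRad f W :=
    csInf_le ⟨0, by rintro r ⟨g, _, rfl⟩; exact coneSpecRad_nonneg g W⟩ ⟨f, hf, rfl⟩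
  _ ≤ opNormW f W := coneSpecRad_le_opNormW f W

end Stmt17Aux

open Stmt17Aux in
theorem statement17 {X : Type*} [NormedAddCommGroup X] [NormedSpace ℝ X]
    (W : Set X) (hW : IsWedge W) (hW0 : ∃ x ∈ W, x ≠ 0)
    (A : Set (X → X)) (hAne : A.Nonempty)
    (hA : ∀ f ∈ A, HomogOn f W ∧ BoundedMapOn f W) :
    Tendsto (fun m : ℕ+ => (subBeta A W (m : ℕ)) ^ (((m : ℕ) : ℝ)⁻¹)) atTop
      (𝓝 (⨅ m : ℕ+, (subBeta A W (m : ℕ)) ^ (((m : ℕ) : ℝ)⁻¹))) ∧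
    Filter.liminf (fun m : ℕ+ => (subGamma A W (m : ℕ)) ^ (((m : ℕ) : ℝ)⁻¹)) atTop =
      ⨅ m : ℕ+, (subBeta A W (m : ℕ)) ^ (((m : ℕ) : ℝ)⁻¹) := by
  have hS := unit_mem hW hW0
  set β : ℕ → ℝ := subBeta A W with hβdef
  set w : ℕ → ℝ := fun n => β n ^ ((n : ℝ)⁻¹) with hwdef
  have wnn : ∀ n : ℕ, 0 ≤ w n := fun n => Real.rpow_nonneg (subBeta_nonneg A W n) _
  set L : ℝ := ⨅ m : ℕ+, w (m : ℕ) with hLdef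
  have Lle : ∀ m : ℕ+, L ≤ w (m : ℕ) := fun m =>
    ciInf_le ⟨0, by rintro r ⟨k, rfl⟩; exact wnn _⟩ m
  have Lnn : 0 ≤ L := le_ciInf fun m => wnn _
  have hsubmul : ∀ m n : ℕ, β (m + n) ≤ β m * β n := fun m n =>
    subBeta_submul hW hAne hA m n
  -- Part 1, over ℕ
  have htendN : Tendsto w atTop (𝓝 L) := by
    by_cases hzero : ∃ N : ℕ, 0 < N ∧ β N = 0
    · obtain ⟨N, hN0, hβN⟩ := hzero
      have hz : ∀ m, N ≤ m → β m = 0 := by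
        intro m hm
        have h1 : β m ≤ β (m - N) * β N := by
          have h := hsubmul (m - N) N
          rwa [Nat.sub_add_cancel hm] at h
        have h2 := subBeta_nonneg A W m
        rw [hβN, mul_zero] at h1
        have h3 : β m = subBeta A W m := by rw [hβdef]
        linarith [h3 ▸ h2]
      have hwz : ∀ m, max N 1 ≤ m → w m = 0 := by
        intro m hm
        have hm1 : (1:ℕ) ≤ m := le_trans (le_max_right N 1) hm
        have : w m = β m ^ ((m : ℝ)⁻¹) := rfl
        rw [this, hz m (le_trans (le_max_left N 1) hm),
          Real.zero_rpow (inv_ne_zero (Nat.cast_ne_zero.2 (by omega)))]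
      have hLz : L = 0 := by
        refine le_antisymm ?_ Lnn
        have h : L ≤ w (max N 1) := Lle ⟨max N 1, by omega⟩
        rwa [hwz (max N 1) le_rfl] at h
      rw [hLz]
      apply Tendsto.congr' _ (tendsto_const_nhds (x := (0:ℝ)))
      filter_upwards [eventually_ge_atTop (max N 1)] with m hm
      exact (hwz m hm).symm
    · push_neg at hzero
      have hpos : ∀ n : ℕ, 0 < β n := by
        intro n
        rcases Nat.eq_zero_or_pos n with rfl | hn
        · have : β 0 = 1 := by rw [hβdef]; exact subBeta_zero hS
          rw [this]; norm_num
        · exact lt_of_le_of_ne (subBeta_nonneg A W n) (Ne.symm (hzero n hn))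
      set v : ℕ → ℝ := fun n => Real.log (β n) with hvdef
      have hsubadd : Subadditive v := by
        intro m n
        have h1 : β (m + n) ≤ β m * β n := hsubmul m n
        have h2 : Real.log (β (m + n)) ≤ Real.log (β m * β n) :=
          (Real.log_le_log_iff (hpos _) (mul_pos (hpos m) (hpos n))).2 h1
        rwa [Real.log_mul (hpos m).ne' (hpos n).ne'] at h2
      have hwexp : ∀ n : ℕ, 0 < n → w n = Real.exp (v n / n) := by
        intro n hn
        have h1 : w n = β n ^ ((n : ℝ)⁻¹) := rfl
        have h2 : v n = Real.log (β n) := rfl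
        rw [h1, Real.rpow_def_of_pos (hpos n), h2, div_eq_mul_inv]
      refine tendsto_order.2 ⟨?_, ?_⟩
      · intro a ha
        filter_upwards [eventually_ge_atTop 1] with m hm
        exact lt_of_lt_of_le ha (Lle ⟨m, hm⟩)
      · intro b hb
        obtain ⟨N, hN⟩ := exists_lt_of_ciInf_lt hb
        have hb0 : 0 < b := lt_of_le_of_lt (wnn _) hN
        have hvN : v (N : ℕ) / ((N : ℕ) : ℝ) < Real.log b := by
          rw [hwexp (N : ℕ) N.pos] at hN
          exact (Real.lt_log_iff_exp_lt hb0).2 hN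
        filter_upwards [hsubadd.eventually_div_lt_of_div_lt N.pos.ne' hvN,
          eventually_ge_atTop 1] with m hm hm1
        rw [hwexp m hm1]
        calc Real.exp (v m / m) < Real.exp (Real.log b) := Real.exp_lt_exp.2 hm
        _ = b := Real.exp_log hb0
  have hcoe : Tendsto (fun m : ℕ+ => (m : ℕ)) atTop atTop := by
    apply tendsto_atTop_atTop.2
    intro b
    exact ⟨⟨b + 1, Nat.succ_pos b⟩, fun a ha =>
      le_trans (Nat.le_succ b) (by exact_mod_cast ha)⟩
  have part1 : Tendsto (fun m : ℕ+ => w (m : ℕ)) atTop (𝓝 L) := htendN.comp hcoe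
  -- Part 2
  set g : ℕ+ → ℝ := fun m => subGamma A W (m : ℕ) ^ (((m : ℕ) : ℝ)⁻¹) with hgdef
  have csr_ge : ∀ (m : ℕ+) (f : X → X), f ∈ famPow A (m : ℕ) →
      L ^ (m : ℕ) ≤ coneSpecRad f W := by
    intro m f hf
    apply le_ciInf
    intro n
    have h1 : β ((n : ℕ) * (m : ℕ)) ≤ opNormW (f^[(n : ℕ)]) W :=
      subBeta_le (iterate_mem_famPow hf (n : ℕ))
    have hk : 0 < (n : ℕ) * (m : ℕ) := Nat.mul_pos n.pos m.pos
    have hek : (w ((n : ℕ) * (m : ℕ))) ^ ((n : ℕ) * (m : ℕ)) = β ((n : ℕ) * (m : ℕ)) := by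
      have h1 : w ((n : ℕ) * (m : ℕ)) = β ((n : ℕ) * (m : ℕ)) ^ ((((n : ℕ) * (m : ℕ) : ℕ) : ℝ)⁻¹) := rfl
      rw [h1, ← Real.rpow_natCast (β ((n : ℕ) * (m : ℕ)) ^ ((((n : ℕ) * (m : ℕ) : ℕ) : ℝ)⁻¹)),
        ← Real.rpow_mul (subBeta_nonneg A W _),
        inv_mul_cancel₀ (Nat.cast_ne_zero.2 hk.ne'), Real.rpow_one]
    have h2 : L ^ ((n : ℕ) * (m : ℕ)) ≤ β ((n : ℕ) * (m : ℕ)) := by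
      have h3 : L ≤ w ((n : ℕ) * (m : ℕ)) := Lle ⟨_, hk⟩
      have h4 := pow_le_pow_left₀ Lnn h3 ((n : ℕ) * (m : ℕ))
      rwa [hek] at h4
    have h5 : (L ^ ((n : ℕ) * (m : ℕ))) ^ (((n : ℕ) : ℝ)⁻¹) ≤
        opNormW (f^[(n : ℕ)]) W ^ (((n : ℕ) : ℝ)⁻¹) :=
      Real.rpow_le_rpow (pow_nonneg Lnn _) (le_trans h2 h1) (by positivity)
    have h6 : (L ^ ((n : ℕ) * (m : ℕ))) ^ (((n : ℕ) : ℝ)⁻¹) = L ^ (m : ℕ) := by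
      have hc : ((((n : ℕ) * (m : ℕ) : ℕ)) : ℝ) * (((n : ℕ) : ℝ))⁻¹ = ((m : ℕ) : ℝ) := by
        push_cast
        field_simp
        try ring
      rw [← Real.rpow_natCast L ((n : ℕ) * (m : ℕ)), ← Real.rpow_mul Lnn, hc,
        Real.rpow_natCast]
    exact h6 ▸ h5
  have hgamma_ge : ∀ m : ℕ+, L ^ (m : ℕ) ≤ subGamma A W (m : ℕ) := fun m =>
    le_csInf ((famPow_nonempty hAne _).image _)
      (by rintro r ⟨f, hf, rfl⟩; exact csr_ge m f hf)
  have hgL : ∀ m : ℕ+, L ≤ g m := by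
    intro m
    have h1 : (L ^ (m : ℕ)) ^ (((m : ℕ) : ℝ)⁻¹) ≤ subGamma A W (m : ℕ) ^ (((m : ℕ) : ℝ)⁻¹) :=
      Real.rpow_le_rpow (pow_nonneg Lnn _) (hgamma_ge m) (by positivity)
    have h2 : (L ^ (m : ℕ)) ^ (((m : ℕ) : ℝ)⁻¹) = L := by
      rw [← Real.rpow_natCast L, ← Real.rpow_mul Lnn,
        mul_inv_cancel₀ (Nat.cast_ne_zero.2 m.pos.ne'), Real.rpow_one]
    exact h2 ▸ h1
  have hgw : ∀ m : ℕ+, g m ≤ w (m : ℕ) :=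
    fun m => Real.rpow_le_rpow (subGamma_nonneg A W _) (subGamma_le_subBeta W hAne _)
      (by positivity)
  have hbdd_g : IsBoundedUnder (· ≥ ·) atTop g :=
    isBoundedUnder_of ⟨0, fun m => Real.rpow_nonneg (subGamma_nonneg A W _) _⟩
  have part2 : liminf g atTop = L := by
    apply le_antisymm
    · have h1 : liminf g atTop ≤ liminf (fun m : ℕ+ => w (m : ℕ)) atTop :=
        liminf_le_liminf (Eventually.of_forall hgw) hbdd_g
          (part1.isBoundedUnder_le.isCoboundedUnder_ge)
      rw [part1.liminf_eq] at h1
      exact h1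
    · obtain ⟨b, hb⟩ := part1.isBoundedUnder_le
      have hcob : IsCoboundedUnder (· ≥ ·) atTop g :=
        isCoboundedUnder_ge_of_eventually_le atTop
          ((Filter.eventually_map.1 hb).mono fun m hm => (hgw m).trans hm)
      exact le_liminf_of_le hcob (Eventually.of_forall hgL)
  exact ⟨part1, part2⟩
end
end

section
/- Let X be a real normed vector space, K ⊂ X a non-zero wedge, and 𝒜 a nonempty set of homogeneous, bounded maps on K. The discrete inclusion DI(𝒜) is selectably stable (i.e. there is a sequence d = (f₁, f₂, …) in 𝒜 with lim_{m→∞} ‖f_m ∘ ⋯ ∘ f₁‖ = 0) if and only if r_*(𝒜) < 1. -/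
open Filter Topology Set

noncomputable section

section Aux

variable {X : Type*} [NormedAddCommGroup X] [NormedSpace ℝ X] {W : Set X} {f g : X → X}

/-- A "good" map: homogeneous and bounded on `W`. -/
def GoodOn (f : X → X) (W : Set X) : Prop := HomogOn f W ∧ BoundedMapOn f W

lemma unit_mem (hW : IsWedge W) (hW0 : ∃ x ∈ W, x ≠ 0) :
    ∃ u, u ∈ W ∧ ‖u‖ = 1 := by
  obtain ⟨x, hx, hx0⟩ := hW0
  have hxn : (0:ℝ) < ‖x‖ := norm_pos_iff.mpr hx0
  refine ⟨‖x‖⁻¹ • x, hW.2 _ (inv_pos.mpr hxn) x hx, ?_⟩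
  rw [norm_smul, norm_inv, norm_norm, inv_mul_cancel₀ hxn.ne']

lemma good_bddAbove (hf : GoodOn f W) :
    BddAbove ((fun x => ‖f x‖) '' {x ∈ W | ‖x‖ = 1}) := by
  obtain ⟨C, hC⟩ := hf.2
  refine ⟨C, ?_⟩
  rintro _ ⟨x, ⟨hxW, hx1⟩, rfl⟩
  simpa [hx1] using hC x hxW

lemma good_zero (hf : GoodOn f W) (h0 : (0:X) ∈ W) : f 0 = 0 := by
  have h := hf.1.2 2 (by norm_num) 0 h0
  rw [smul_zero] at h
  have h2 : (2:ℝ) • f 0 - f 0 = 0 := by rw [← h, sub_self]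
  rw [two_smul, add_sub_cancel_right] at h2
  exact h2

lemma opNormW_nonneg (hS : ∃ u, u ∈ W ∧ ‖u‖ = 1) (hf : GoodOn f W) :
    0 ≤ opNormW f W := by
  obtain ⟨u, huW, hu1⟩ := hS
  calc (0:ℝ) ≤ ‖f u‖ := norm_nonneg _
    _ ≤ opNormW f W := le_csSup (good_bddAbove hf) ⟨u, ⟨huW, hu1⟩, rfl⟩

lemma norm_apply_le (hW : IsWedge W) (hf : GoodOn f W) :
    ∀ x ∈ W, ‖f x‖ ≤ opNormW f W * ‖x‖ := by
  intro x hx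
  by_cases hx0 : x = 0
  · subst hx0; simp [good_zero hf hx]
  · have hxn : (0:ℝ) < ‖x‖ := norm_pos_iff.mpr hx0
    have huW : ‖x‖⁻¹ • x ∈ W := hW.2 _ (inv_pos.mpr hxn) x hx
    have hu1 : ‖‖x‖⁻¹ • x‖ = 1 := by
      rw [norm_smul, norm_inv, norm_norm, inv_mul_cancel₀ hxn.ne']
    have hfx : f x = ‖x‖ • f (‖x‖⁻¹ • x) := by
      have h := hf.1.2 ‖x‖ hxn _ huW
      rwa [smul_inv_smul₀ hxn.ne'] at h
    have hle : ‖f (‖x‖⁻¹ • x)‖ ≤ opNormW f W :=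
      le_csSup (good_bddAbove hf) ⟨_, ⟨huW, hu1⟩, rfl⟩
    rw [hfx, norm_smul, norm_norm, mul_comm]
    exact mul_le_mul_of_nonneg_right hle hxn.le

lemma opNormW_le (hS : ∃ u, u ∈ W ∧ ‖u‖ = 1) {C : ℝ}
    (h : ∀ x ∈ W, ‖x‖ = 1 → ‖f x‖ ≤ C) : opNormW f W ≤ C := by
  obtain ⟨u, huW, hu1⟩ := hS
  refine csSup_le ⟨‖f u‖, ⟨u, ⟨huW, hu1⟩, rfl⟩⟩ ?_
  rintro _ ⟨x, ⟨hxW, hx1⟩, rfl⟩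
  exact h x hxW hx1

lemma good_id : GoodOn (id : X → X) W :=
  ⟨⟨Set.mapsTo_id W, fun _ _ _ _ => rfl⟩, ⟨1, fun x _ => by simp⟩⟩

lemma good_comp (hf : GoodOn f W) (hg : GoodOn g W) : GoodOn (f ∘ g) W := by
  refine ⟨⟨hf.1.1.comp hg.1.1, fun c hc x hx => ?_⟩, ?_⟩
  · simp only [Function.comp_apply]
    rw [hg.1.2 c hc x hx, hf.1.2 c hc _ (hg.1.1 hx)]
  · obtain ⟨Cf, hCf⟩ := hf.2
    obtain ⟨Cg, hCg⟩ := hg.2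
    refine ⟨max Cf 0 * max Cg 0, fun x hx => ?_⟩
    have h1 : ‖f (g x)‖ ≤ max Cf 0 * ‖g x‖ :=
      le_trans (hCf _ (hg.1.1 hx)) (mul_le_mul_of_nonneg_right (le_max_left _ _) (norm_nonneg _))
    have h2 : ‖g x‖ ≤ max Cg 0 * ‖x‖ :=
      le_trans (hCg _ hx) (mul_le_mul_of_nonneg_right (le_max_left _ _) (norm_nonneg _))
    calc ‖(f ∘ g) x‖ = ‖f (g x)‖ := rfl
      _ ≤ max Cf 0 * ‖g x‖ := h1
      _ ≤ max Cf 0 * (max Cg 0 * ‖x‖) :=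
          mul_le_mul_of_nonneg_left h2 (le_max_right _ _)
      _ = max Cf 0 * max Cg 0 * ‖x‖ := by ring

lemma opNormW_comp_le (hW : IsWedge W) (hS : ∃ u, u ∈ W ∧ ‖u‖ = 1)
    (hf : GoodOn f W) (hg : GoodOn g W) :
    opNormW (f ∘ g) W ≤ opNormW f W * opNormW g W := by
  refine opNormW_le hS fun x hxW hx1 => ?_
  calc ‖(f ∘ g) x‖ = ‖f (g x)‖ := rfl
    _ ≤ opNormW f W * ‖g x‖ := norm_apply_le hW hf _ (hg.1.1 hxW)
    _ ≤ opNormW f W * (opNormW g W * ‖x‖) :=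
        mul_le_mul_of_nonneg_left (norm_apply_le hW hg x hxW) (opNormW_nonneg hS hf)
    _ = opNormW f W * opNormW g W := by rw [hx1, mul_one]

lemma opNormW_id_le (hS : ∃ u, u ∈ W ∧ ‖u‖ = 1) : opNormW (id : X → X) W ≤ 1 :=
  opNormW_le hS fun x _ hx1 => by simp [hx1]

lemma famPow_good {A : Set (X → X)} (hA : ∀ f ∈ A, GoodOn f W) :
    ∀ m, ∀ g ∈ famPow A m, GoodOn g W := by
  intro m
  induction m with
  | zero => intro g hg; rw [famPow] at hg; rw [Set.mem_singleton_iff] at hg; subst hg; exact good_id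
  | succ m ih =>
    rintro g ⟨f, hf, g', hg', rfl⟩
    exact good_comp (hA f hf) (ih g' hg')

lemma famPow_nonempty {A : Set (X → X)} (hAne : A.Nonempty) :
    ∀ m, (famPow A m).Nonempty := by
  intro m
  induction m with
  | zero => exact ⟨id, rfl⟩
  | succ m ih =>
    obtain ⟨f, hf⟩ := hAne
    obtain ⟨g, hg⟩ := ih
    exact ⟨f ∘ g, f, hf, g, hg, rfl⟩

lemma seqComp_mem {A : Set (X → X)} {d : ℕ → X → X} (hd : ∀ i, d i ∈ A) :
    ∀ m, seqComp d m ∈ famPow A m := by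
  intro m
  induction m with
  | zero => rfl
  | succ m ih => exact ⟨d m, hd m, seqComp d m, ih, rfl⟩

lemma seqComp_congr {d d' : ℕ → X → X} :
    ∀ m, (∀ i < m, d i = d' i) → seqComp d m = seqComp d' m := by
  intro m
  induction m with
  | zero => intro _; rfl
  | succ m ih =>
    intro h
    show d m ∘ seqComp d m = d' m ∘ seqComp d' m
    rw [h m (Nat.lt_succ_self m), ih fun i hi => h i (hi.trans (Nat.lt_succ_self m))]

lemma seqComp_add {d : ℕ → X → X} (n : ℕ) :
    ∀ j, seqComp d (n + j) = seqComp (fun i => d (n + i)) j ∘ seqComp d n := by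
  intro j
  induction j with
  | zero => rfl
  | succ j ih =>
    show d (n + j) ∘ seqComp d (n + j) = _
    rw [ih]
    rfl

lemma subBeta_nonneg {A : Set (X → X)} (hS : ∃ u, u ∈ W ∧ ‖u‖ = 1)
    (hAne : A.Nonempty) (hA : ∀ f ∈ A, GoodOn f W) (m : ℕ) :
    0 ≤ subBeta A W m := by
  refine le_csInf ((famPow_nonempty hAne m).image _) ?_
  rintro _ ⟨g, hg, rfl⟩
  exact opNormW_nonneg hS (famPow_good hA m g hg)

lemma exists_word {A : Set (X → X)} (hAne : A.Nonempty) :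
    ∀ m, ∀ g ∈ famPow A m, ∃ d : ℕ → X → X, (∀ i, d i ∈ A) ∧ seqComp d m = g := by
  intro m
  induction m with
  | zero =>
    intro g hg
    rw [famPow] at hg; rw [Set.mem_singleton_iff] at hg; subst hg
    obtain ⟨f, hf⟩ := hAne
    exact ⟨fun _ => f, fun _ => hf, rfl⟩
  | succ m ih =>
    rintro g ⟨f, hf, g', hg', rfl⟩
    obtain ⟨d', hd'A, hd'⟩ := ih g' hg'
    refine ⟨fun i => if i = m then f else d' i, fun i => ?_, ?_⟩
    · by_cases h : i = m <;> simp [h, hf, hd'A i]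
    · show (if m = m then f else d' m) ∘ seqComp (fun i => if i = m then f else d' i) m = f ∘ g'
      rw [if_pos rfl,
        seqComp_congr m (fun i hi => if_neg hi.ne), hd']

end Aux

theorem statement19 {X : Type*} [NormedAddCommGroup X] [NormedSpace ℝ X]
    (W : Set X) (hW : IsWedge W) (hW0 : ∃ x ∈ W, x ≠ 0)
    (A : Set (X → X)) (hAne : A.Nonempty)
    (hA : ∀ f ∈ A, HomogOn f W ∧ BoundedMapOn f W) :
    (∃ d : ℕ → X → X, (∀ i, d i ∈ A) ∧
        Tendsto (fun m : ℕ => opNormW (seqComp d m) W) atTop (𝓝 0)) ↔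
      (⨅ m : ℕ+, (subBeta A W (m : ℕ)) ^ (((m : ℕ) : ℝ)⁻¹)) < 1 := by
  have hGood : ∀ f ∈ A, GoodOn f W := hA
  have hS : ∃ u, u ∈ W ∧ ‖u‖ = 1 := unit_mem hW hW0
  have hseqgood : ∀ (e : ℕ → X → X), (∀ i, GoodOn (e i) W) → ∀ n, GoodOn (seqComp e n) W := by
    intro e he n
    induction n with
    | zero => exact good_id
    | succ n ih => exact good_comp (he n) ih
  constructor
  · rintro ⟨d, hdA, hten⟩
    have hev : ∀ᶠ n in atTop, opNormW (seqComp d n) W < 1/2 :=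
      hten.eventually_lt_const (by norm_num)
    obtain ⟨N, hN⟩ := eventually_atTop.1 hev
    set m : ℕ+ := ⟨N + 1, Nat.succ_pos N⟩ with hmdef
    have hβle : subBeta A W (N+1) ≤ opNormW (seqComp d (N+1)) W := by
      apply csInf_le
      · refine ⟨0, ?_⟩
        rintro _ ⟨g, hg, rfl⟩
        exact opNormW_nonneg hS (famPow_good hGood _ g hg)
      · exact ⟨seqComp d (N+1), seqComp_mem hdA (N+1), rfl⟩
    have hβlt : subBeta A W (N+1) < 1 :=
      lt_of_le_of_lt hβle (lt_trans (hN _ (Nat.le_succ N)) (by norm_num))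
    have hβ0 : 0 ≤ subBeta A W (N+1) := subBeta_nonneg hS hAne hGood _
    have hterm : subBeta A W ((m:ℕ)) ^ (((m:ℕ):ℝ))⁻¹ < 1 := by
      apply Real.rpow_lt_one hβ0 hβlt
      have : (0:ℝ) < ((N:ℝ) + 1) := by positivity
      rw [hmdef]
      push_cast
      apply inv_pos.mpr
      exact_mod_cast Nat.succ_pos N
    refine lt_of_le_of_lt (ciInf_le ⟨0, ?_⟩ m) hterm
    rintro _ ⟨k, rfl⟩
    exact Real.rpow_nonneg (subBeta_nonneg hS hAne hGood _) _
  · intro h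
    obtain ⟨m, hm⟩ := exists_lt_of_ciInf_lt h
    have hβ0 : 0 ≤ subBeta A W m := subBeta_nonneg hS hAne hGood _
    have hmpos : 0 < (m:ℕ) := m.pos
    have hβ1 : subBeta A W (m:ℕ) < 1 := by
      by_contra hge
      push_neg at hge
      have h1 : (1:ℝ) ≤ subBeta A W m ^ (((m:ℕ):ℝ))⁻¹ := by
        calc (1:ℝ) = 1 ^ (((m:ℕ):ℝ))⁻¹ := (Real.one_rpow _).symm
          _ ≤ _ := Real.rpow_le_rpow zero_le_one hge (by positivity)
      linarith
    obtain ⟨b, hbmem, hb⟩ :=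
      exists_lt_of_csInf_lt ((famPow_nonempty hAne (m:ℕ)).image _) hβ1
    obtain ⟨g, hg, rfl⟩ := hbmem
    obtain ⟨d, hdA, hdg⟩ := exists_word hAne (m:ℕ) g hg
    set q := opNormW g W with hqdef
    have hq0 : 0 ≤ q := opNormW_nonneg hS (famPow_good hGood _ g hg)
    set mn : ℕ := (m:ℕ) with hmn
    set D : ℕ → X → X := fun i => d (i % mn) with hD
    have hDA : ∀ i, D i ∈ A := fun i => hdA _
    have hDg : ∀ i, GoodOn (D i) W := fun i => hGood _ (hDA i)
    have hdgood : ∀ i, GoodOn (d i) W := fun i => hGood _ (hdA i)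
    have hsplit : ∀ k j, j ≤ mn →
        seqComp D (mn * k + j) = seqComp d j ∘ seqComp D (mn * k) := by
      intro k j hj
      rw [seqComp_add (mn*k) j]
      have he : seqComp (fun i => D (mn * k + i)) j = seqComp d j := by
        apply seqComp_congr
        intro i hi
        show d ((mn * k + i) % mn) = d i
        rw [Nat.mul_add_mod, Nat.mod_eq_of_lt (lt_of_lt_of_le hi hj)]
      rw [he]
    have key : ∀ k, opNormW (seqComp D (mn * k)) W ≤ q ^ k := by
      intro k
      induction k with
      | zero =>
        rw [Nat.mul_zero, pow_zero]
        exact opNormW_id_le hS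
      | succ k ih =>
        have heq : seqComp D (mn * (k+1)) = g ∘ seqComp D (mn * k) := by
          rw [Nat.mul_succ, hsplit k mn le_rfl, hdg]
        rw [heq, pow_succ]
        calc opNormW (g ∘ seqComp D (mn*k)) W
            ≤ q * opNormW (seqComp D (mn*k)) W :=
              opNormW_comp_le hW hS (famPow_good hGood _ g hg) (hseqgood D hDg _)
          _ ≤ q * q ^ k := mul_le_mul_of_nonneg_left ih hq0
          _ = q ^ k * q := mul_comm _ _
    obtain ⟨M, hM0, hM⟩ : ∃ M, 0 ≤ M ∧ ∀ r < mn, opNormW (seqComp d r) W ≤ M := by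
      refine ⟨(Finset.range mn).sup' (Finset.nonempty_range_iff.mpr hmpos.ne')
        (fun r => opNormW (seqComp d r) W), ?_, ?_⟩
      · exact le_trans (opNormW_nonneg hS (hseqgood d hdgood 0))
          (Finset.le_sup' (fun r => opNormW (seqComp d r) W) (Finset.mem_range.mpr hmpos))
      · intro r hr
        exact Finset.le_sup' (fun r => opNormW (seqComp d r) W) (Finset.mem_range.mpr hr)
    have hbound : ∀ n, opNormW (seqComp D n) W ≤ M * q ^ (n / mn) := by
      intro n
      have hn : mn * (n / mn) + n % mn = n := Nat.div_add_mod n mn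
      have hsp := hsplit (n / mn) (n % mn) (Nat.mod_lt n hmpos).le
      rw [hn] at hsp
      rw [hsp]
      calc opNormW (seqComp d (n % mn) ∘ seqComp D (mn * (n / mn))) W
          ≤ opNormW (seqComp d (n % mn)) W * opNormW (seqComp D (mn * (n / mn))) W :=
            opNormW_comp_le hW hS (hseqgood d hdgood _) (hseqgood D hDg _)
        _ ≤ M * q ^ (n / mn) :=
            mul_le_mul (hM _ (Nat.mod_lt n hmpos)) (key _)
              (opNormW_nonneg hS (hseqgood D hDg _)) hM0
    refine ⟨D, hDA, ?_⟩
    have hdiv : Tendsto (fun n : ℕ => n / mn) atTop atTop := by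
      apply tendsto_atTop_atTop.2
      intro b
      exact ⟨b * mn, fun n hn => (Nat.le_div_iff_mul_le hmpos).2 hn⟩
    have hql : Tendsto (fun n : ℕ => M * q ^ (n / mn)) atTop (𝓝 (M * 0)) :=
      tendsto_const_nhds.mul ((tendsto_pow_atTop_nhds_zero_of_lt_one hq0 hb).comp hdiv)
    rw [mul_zero] at hql
    exact squeeze_zero (fun n => opNormW_nonneg hS (hseqgood D hDg n)) hbound hql
end
end
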